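/- Every interval exchange transformation T of [0,1) having balanced partition lengths with some constant c > 0 is uniquely ergodic: Lebesgue measure on [0,1) is the unique T-invariant Borel probability measure on [0,1). -/

import Mathlib

open MeasureTheory Filter Set
open scoped ENNReal

/-- `a` and `b` are consecutive points of the set `S` of partition points, i.e. the
interval with endpoints `a` and `b` is one of the subintervals of the partition of
`[0,1)` determined by `S`. -/
def IsGap (S : Set ℝ) (a b : ℝ) : Prop :=
  a ∈ S ∧ b ∈ S ∧ a < b ∧ ∀ z ∈ S, z ≤ a ∨ b ≤ z

/-- The set of points (including the endpoints `0` and `1` of `[0,1)`) determining the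
partition `P_j` of `[0,1)` by the points `T^{-k} β_i`, `1 ≤ i ≤ r-1`, `0 ≤ k ≤ j-1`,
where `Tinv` denotes the inverse of the interval exchange transformation `T`. -/
def partPts (r : ℕ) (β : ℕ → ℝ) (Tinv : ℝ → ℝ) (j : ℕ) : Set ℝ :=
  {0, 1} ∪ {x | ∃ i k : ℕ, 1 ≤ i ∧ i < r ∧ k < j ∧ x = Tinv^[k] (β i)}

/-- The set of points (including `0` and `1`) determining the partition of `[0,1)` by the
points `T^{-k+l} β_i`, `0 ≤ l ≤ j-1` (for fixed `i` and `k`). -/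
def partPts2 (β : ℕ → ℝ) (T Tinv : ℝ → ℝ) (i k j : ℕ) : Set ℝ :=
  {0, 1} ∪ {x | ∃ l : ℕ, l < j ∧ x = T^[l] (Tinv^[k] (β i))}

/-- An IET `T` (with discontinuities `β_0 < … < β_r` and inverse `Tinv`) has balanced
partition lengths with constant `c > 0`:
(i) all subintervals of the partition `P_j` have length between `1/(cj)` and `c/j`;
(ii) for all `0 ≤ i ≤ r-1` and `0 ≤ k ≤ j-1`, all subintervals of the partition of
`[0,1)` by the points `T^{-k+l} β_i`, `0 ≤ l ≤ j-1`, have length between `1/(cj)` and `c/j`. -/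
def BalancedPartitionLengths (r : ℕ) (β : ℕ → ℝ) (T Tinv : ℝ → ℝ) (c : ℝ) : Prop :=
  (∀ j : ℕ, 1 ≤ j → ∀ a b : ℝ, IsGap (partPts r β Tinv j) a b →
    1 / (c * j) ≤ b - a ∧ b - a ≤ c / j) ∧
  (∀ j : ℕ, 1 ≤ j → ∀ i : ℕ, i < r → ∀ k : ℕ, k < j →
    ∀ a b : ℝ, IsGap (partPts2 β T Tinv i k j) a b →
      1 / (c * j) ≤ b - a ∧ b - a ≤ c / j)

/-- The Birkhoff sum `h^{(j)}(x) = ∑_{k=0}^{j-1} h(T^k x)`. -/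
noncomputable def birkhoff (T : ℝ → ℝ) (h : ℝ → ℝ) (j : ℕ) (x : ℝ) : ℝ :=
  ∑ k ∈ Finset.range j, h (T^[k] x)

/-- The function `f(x) = ∑_{i=0}^{r-1} (-c_i⁺ log{x - β_i}) + ∑_{i=0}^{r-1} (-c_{i+1}⁻ log{β_{i+1} - x})`,
where `{·}` is the fractional part. -/
noncomputable def logf (r : ℕ) (β : ℕ → ℝ) (cp cm : ℕ → ℝ) (x : ℝ) : ℝ :=
  (∑ i ∈ Finset.range r, -(cp i * Real.log (Int.fract (x - β i)))) +
  (∑ i ∈ Finset.range r, -(cm (i + 1) * Real.log (Int.fract (β (i + 1) - x))))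


lemma gap_count_aux (Q : Finset ℝ) (h0 : (0:ℝ) ∈ Q) (g : ℝ) (hg : 0 < g)
    (hgap : ∀ a b : ℝ, IsGap (↑Q) a b → b - a ≤ g) (u : ℝ) (h0u : 0 ≤ u) :
    ∀ n : ℕ, ∀ q ∈ Q, u ≤ q → (Q.filter (fun z => z ∈ Set.Icc u q)).card ≤ n →
      q - u ≤ n * g := by
  classical
  intro n
  induction n with
  | zero =>
    intro q hq huq hcard
    exfalso
    have hmem : q ∈ Q.filter (fun z => z ∈ Set.Icc u q) := by
      simp [Finset.mem_filter, hq, huq]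
    have := Finset.card_pos.mpr ⟨q, hmem⟩
    omega
  | succ n ih =>
    intro q hq huq hcard
    rcases eq_or_lt_of_le huq with h | huq'
    · rw [← h]; simp; positivity
    · have hne : (Q.filter (fun z => z < q)).Nonempty := ⟨0, by
        simp [Finset.mem_filter, h0, lt_of_le_of_lt h0u huq']⟩
      set p := (Q.filter (fun z => z < q)).max' hne with hp
      have hpmem : p ∈ Q.filter (fun z => z < q) := Finset.max'_mem _ hne
      rw [Finset.mem_filter] at hpmem
      have hmax : ∀ z ∈ Q, z < q → z ≤ p := fun z hz hzq =>
        Finset.le_max' _ z (by simp [Finset.mem_filter, hz, hzq])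
      have hgapPQ : IsGap (↑Q) p q := by
        refine ⟨hpmem.1, hq, hpmem.2, fun z hz => ?_⟩
        rcases lt_or_ge z q with h' | h'
        · exact Or.inl (hmax z (Finset.mem_coe.mp hz) h')
        · exact Or.inr h'
      have hqp : q - p ≤ g := hgap p q hgapPQ
      rcases lt_or_ge p u with hpu | hup
      · have h1 : q - u ≤ g := by linarith
        have h2 : (0:ℝ) ≤ n * g := by positivity
        push_cast; linarith
      · have hsub : Q.filter (fun z => z ∈ Set.Icc u p)
            = (Q.filter (fun z => z ∈ Set.Icc u q)).erase q := by
          ext z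
          simp only [Finset.mem_filter, Finset.mem_erase, Set.mem_Icc]
          constructor
          · rintro ⟨hz, hz1, hz2⟩
            exact ⟨by rintro rfl; exact absurd hz2 (not_le.2 hpmem.2), hz, hz1,
              le_trans hz2 (le_of_lt hpmem.2)⟩
          · rintro ⟨hzq, hz, hz1, hz2⟩
            exact ⟨hz, hz1, hmax z hz (lt_of_le_of_ne hz2 hzq)⟩
        have hcard' : (Q.filter (fun z => z ∈ Set.Icc u p)).card ≤ n := by
          rw [hsub]
          have hqmem : q ∈ Q.filter (fun z => z ∈ Set.Icc u q) := by
            simp [Finset.mem_filter, hq, huq]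
          have := Finset.card_erase_of_mem hqmem
          omega
        have := ih p hpmem.1 hup hcard'
        push_cast
        push_cast at this
        linarith

lemma gap_count (Q : Finset ℝ) (h0 : (0:ℝ) ∈ Q) (h1 : (1:ℝ) ∈ Q) (g : ℝ) (hg : 0 < g)
    (hgap : ∀ a b : ℝ, IsGap (↑Q) a b → b - a ≤ g) (u w : ℝ)
    (h0u : 0 ≤ u) (hw1 : w ≤ 1) (huw : u ≤ w) :
    w - u ≤ ((Q.filter (fun q => q ∈ Set.Icc u w)).card + 1) * g := by
  classical
  set P := Q.filter (fun q => q ∈ Set.Icc u w) with hP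
  rcases P.eq_empty_or_nonempty with hPe | hPne
  · have hu0 : 0 < u := by
      rcases eq_or_lt_of_le h0u with h | h
      · exfalso
        have hm : (0:ℝ) ∈ P := by
          rw [hP, Finset.mem_filter]
          exact ⟨h0, Set.mem_Icc.mpr ⟨le_of_eq h.symm, by linarith⟩⟩
        rw [hPe] at hm; simp at hm
      · exact h
    have hw1' : w < 1 := by
      rcases eq_or_lt_of_le hw1 with h | h
      · exfalso
        have hm : (1:ℝ) ∈ P := by
          rw [hP, Finset.mem_filter]
          exact ⟨h1, Set.mem_Icc.mpr ⟨by linarith, le_of_eq h.symm⟩⟩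
        rw [hPe] at hm; simp at hm
      · exact h
    have hnep : (Q.filter (fun z => z < u)).Nonempty := ⟨0, by simp [Finset.mem_filter, h0, hu0]⟩
    have hneq : (Q.filter (fun z => w < z)).Nonempty := ⟨1, by simp [Finset.mem_filter, h1, hw1']⟩
    set p := (Q.filter (fun z => z < u)).max' hnep with hpdef
    set q := (Q.filter (fun z => w < z)).min' hneq with hqdef
    have hpmem : p ∈ Q.filter (fun z => z < u) := Finset.max'_mem _ hnep
    have hqmem : q ∈ Q.filter (fun z => w < z) := Finset.min'_mem _ hneq
    rw [Finset.mem_filter] at hpmem hqmem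
    have hgappq : IsGap (↑Q) p q := by
      refine ⟨hpmem.1, hqmem.1, by linarith [hpmem.2, hqmem.2], fun z hz => ?_⟩
      have hzQ := Finset.mem_coe.mp hz
      rcases lt_or_ge z u with h' | h'
      · exact Or.inl (Finset.le_max' _ z (by simp [Finset.mem_filter, hzQ, h']))
      · rcases le_or_gt z w with h'' | h''
        · exfalso
          have hm : z ∈ P := by
            rw [hP, Finset.mem_filter]; exact ⟨hzQ, Set.mem_Icc.mpr ⟨h', h''⟩⟩
          rw [hPe] at hm; simp at hm
        · exact Or.inr (Finset.min'_le _ z (by simp [Finset.mem_filter, hzQ, h'']))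
    have hle := hgap p q hgappq
    have hwu : w - u ≤ g := by linarith [hpmem.2, hqmem.2]
    have : (0:ℝ) ≤ (P.card : ℝ) * g := by positivity
    linarith
  · set qm := P.max' hPne with hqm
    have hqmP : qm ∈ P := P.max'_mem hPne
    have hqmQ : qm ∈ Q ∧ u ≤ qm ∧ qm ≤ w := by
      rw [hP, Finset.mem_filter, Set.mem_Icc] at hqmP; tauto
    have hwqm : w - qm ≤ g := by
      rcases le_or_gt w qm with h' | h'
      · linarith
      · have hqm1 : qm < 1 := lt_of_lt_of_le h' hw1
        have hneq : (Q.filter (fun z => qm < z)).Nonempty :=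
          ⟨1, by simp [Finset.mem_filter, h1, hqm1]⟩
        set q' := (Q.filter (fun z => qm < z)).min' hneq with hq'def
        have hq'mem : q' ∈ Q.filter (fun z => qm < z) := Finset.min'_mem _ hneq
        rw [Finset.mem_filter] at hq'mem
        have hq'w : w < q' := by
          by_contra h''
          push_neg at h''
          have hm : q' ∈ P := by
            rw [hP, Finset.mem_filter]
            exact ⟨hq'mem.1, Set.mem_Icc.mpr ⟨le_trans hqmQ.2.1 (le_of_lt hq'mem.2), h''⟩⟩
          have := P.le_max' q' hm
          rw [← hqm] at this
          exact absurd this (not_le.2 hq'mem.2)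
        have hgapq : IsGap (↑Q) qm q' := by
          refine ⟨hqmQ.1, hq'mem.1, hq'mem.2, fun z hz => ?_⟩
          have hzQ := Finset.mem_coe.mp hz
          rcases le_or_gt z qm with hz' | hz'
          · exact Or.inl hz'
          · exact Or.inr (Finset.min'_le _ z (by simp [Finset.mem_filter, hzQ, hz']))
        have := hgap qm q' hgapq
        linarith
    have hcard : (Q.filter (fun z => z ∈ Set.Icc u qm)).card ≤ P.card := by
      apply Finset.card_le_card
      intro z hz
      rw [Finset.mem_filter, Set.mem_Icc] at hz
      rw [hP, Finset.mem_filter, Set.mem_Icc]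
      exact ⟨hz.1, hz.2.1, le_trans hz.2.2 hqmQ.2.2⟩
    have hmain := gap_count_aux Q h0 g hg hgap u h0u P.card qm hqmQ.1 hqmQ.2.1 hcard
    push_cast
    push_cast at hmain
    linarith

noncomputable def partFinset (r : ℕ) (β : ℕ → ℝ) (Tinv : ℝ → ℝ) (j : ℕ) : Finset ℝ := by
  classical
  exact insert 0 (insert 1 ((((Finset.range r).filter (fun i => 1 ≤ i)) ×ˢ Finset.range j).image
    (fun p => Tinv^[p.2] (β p.1))))

noncomputable def partFinset2 (β : ℕ → ℝ) (T Tinv : ℝ → ℝ) (i k j : ℕ) : Finset ℝ :=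
  insert 0 (insert 1 ((Finset.range j).image (fun l => T^[l] (Tinv^[k] (β i)))))

lemma coe_partFinset (r : ℕ) (β : ℕ → ℝ) (Tinv : ℝ → ℝ) (j : ℕ) :
    (partFinset r β Tinv j : Set ℝ) = partPts r β Tinv j := by
  classical
  ext x
  simp only [partFinset, partPts, Finset.coe_insert, Set.mem_insert_iff, Finset.coe_image,
    Set.mem_image, Finset.mem_coe, Finset.mem_product, Finset.mem_filter, Finset.mem_range,
    Set.mem_union, Set.mem_setOf_eq, Prod.exists]
  constructor
  · rintro (rfl | rfl | ⟨i, k, ⟨⟨hir, h1i⟩, hkj⟩, rfl⟩)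
    · exact Or.inl (Or.inl rfl)
    · exact Or.inl (Or.inr rfl)
    · exact Or.inr ⟨i, k, h1i, hir, hkj, rfl⟩
  · rintro ((rfl | rfl) | ⟨i, k, h1i, hir, hkj, rfl⟩)
    · exact Or.inl rfl
    · exact Or.inr (Or.inl rfl)
    · exact Or.inr (Or.inr ⟨i, k, ⟨⟨hir, h1i⟩, hkj⟩, rfl⟩)

lemma coe_partFinset2 (β : ℕ → ℝ) (T Tinv : ℝ → ℝ) (i k j : ℕ) :
    (partFinset2 β T Tinv i k j : Set ℝ) = partPts2 β T Tinv i k j := by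
  classical
  ext x
  simp only [partFinset2, partPts2, Finset.coe_insert, Set.mem_insert_iff, Finset.coe_image,
    Set.mem_image, Finset.mem_coe, Finset.mem_range, Set.mem_union, Set.mem_setOf_eq]
  constructor
  · rintro (rfl | rfl | ⟨l, hl, rfl⟩)
    · exact Or.inl (Or.inl rfl)
    · exact Or.inl (Or.inr rfl)
    · exact Or.inr ⟨l, hl, rfl⟩
  · rintro ((rfl | rfl) | ⟨l, hl, rfl⟩)
    · exact Or.inl rfl
    · exact Or.inr (Or.inl rfl)
    · exact Or.inr (Or.inr ⟨l, hl, rfl⟩)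

section Dyn

variable (r : ℕ) (β : ℕ → ℝ) (T Tinv : ℝ → ℝ)

lemma beta_mem (hβ0 : β 0 = 0) (hβr : β r = 1)
    (hβmono : ∀ i j : ℕ, i < j → j ≤ r → β i < β j) (hr : 2 ≤ r) :
    ∀ i < r, β i ∈ Set.Ico (0:ℝ) 1 := by
  intro i hi
  constructor
  · rcases Nat.eq_zero_or_pos i with h | h
    · rw [h, hβ0]
    · rw [← hβ0]; exact le_of_lt (hβmono 0 i h (le_of_lt hi))
  · rw [← hβr]; exact hβmono i r hi le_rfl

lemma T_iter_mem (hTmaps : Set.MapsTo T (Set.Ico (0:ℝ) 1) (Set.Ico (0:ℝ) 1)) :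
    ∀ x ∈ Set.Ico (0:ℝ) 1, ∀ l : ℕ, T^[l] x ∈ Set.Ico (0:ℝ) 1 := by
  intro x hx l
  exact Set.MapsTo.iterate hTmaps l hx

lemma Tinv_iter_mem (hTinv : ∀ x ∈ Set.Ico (0:ℝ) 1,
      Tinv (T x) = x ∧ T (Tinv x) = x ∧ Tinv x ∈ Set.Ico (0:ℝ) 1) :
    ∀ x ∈ Set.Ico (0:ℝ) 1, ∀ l : ℕ, Tinv^[l] x ∈ Set.Ico (0:ℝ) 1 := by
  intro x hx l
  exact Set.MapsTo.iterate (fun y hy => (hTinv y hy).2.2) l hx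

lemma iter_left_inv (hTmaps : Set.MapsTo T (Set.Ico (0:ℝ) 1) (Set.Ico (0:ℝ) 1))
    (hTinv : ∀ x ∈ Set.Ico (0:ℝ) 1,
      Tinv (T x) = x ∧ T (Tinv x) = x ∧ Tinv x ∈ Set.Ico (0:ℝ) 1) :
    ∀ x ∈ Set.Ico (0:ℝ) 1, ∀ l : ℕ, Tinv^[l] (T^[l] x) = x := by
  intro x hx l
  induction l with
  | zero => simp
  | succ l ih =>
    rw [Function.iterate_succ_apply' T, Function.iterate_succ_apply Tinv]
    rw [(hTinv _ (T_iter_mem T hTmaps x hx l)).1]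
    exact ih

lemma partPts_subset (hβ0 : β 0 = 0) (hβr : β r = 1)
    (hβmono : ∀ i j : ℕ, i < j → j ≤ r → β i < β j) (hr : 2 ≤ r)
    (hTinv : ∀ x ∈ Set.Ico (0:ℝ) 1,
      Tinv (T x) = x ∧ T (Tinv x) = x ∧ Tinv x ∈ Set.Ico (0:ℝ) 1) (j : ℕ) :
    partPts r β Tinv j ⊆ Set.Icc (0:ℝ) 1 := by
  rintro x (h | ⟨i, k, h1i, hir, hkj, rfl⟩)
  · rcases h with rfl | h
    · exact ⟨le_rfl, zero_le_one⟩
    · rw [Set.mem_singleton_iff] at h; rw [h]; exact ⟨zero_le_one, le_rfl⟩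
  · have := Tinv_iter_mem T Tinv hTinv (β i) (beta_mem r β hβ0 hβr hβmono hr i hir) k
    exact ⟨this.1, le_of_lt this.2⟩

lemma piece_exists (hβ0 : β 0 = 0) (hβr : β r = 1)
    (hβmono : ∀ i j : ℕ, i < j → j ≤ r → β i < β j) :
    ∀ x ∈ Set.Ico (0:ℝ) 1, ∃ i, i < r ∧ x ∈ Set.Ico (β i) (β (i + 1)) := by
  classical
  intro x hx
  have hne : ((Finset.range (r+1)).filter (fun i => β i ≤ x)).Nonempty :=
    ⟨0, by simp [Finset.mem_filter, hβ0, hx.1]⟩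
  set i := ((Finset.range (r+1)).filter (fun i => β i ≤ x)).max' hne with hi
  have him : i ∈ (Finset.range (r+1)).filter (fun i => β i ≤ x) := Finset.max'_mem _ hne
  rw [Finset.mem_filter, Finset.mem_range] at him
  have hir : i < r := by
    rcases Nat.lt_or_ge i r with h | h
    · exact h
    · exfalso
      have : i = r := by omega
      rw [this, hβr] at him
      exact absurd him.2 (not_le.2 hx.2)
  refine ⟨i, hir, him.2, ?_⟩
  by_contra hcon
  push_neg at hcon
  have : i + 1 ∈ (Finset.range (r+1)).filter (fun i => β i ≤ x) := by
    rw [Finset.mem_filter, Finset.mem_range]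
    exact ⟨by omega, hcon⟩
  have := Finset.le_max' _ _ this
  rw [← hi] at this
  omega

/-- every point of [0,1) lies in a gap of the partition points -/
lemma exists_atom (hβ0 : β 0 = 0) (hβr : β r = 1)
    (hβmono : ∀ i j : ℕ, i < j → j ≤ r → β i < β j) (hr : 2 ≤ r)
    (hTinv : ∀ x ∈ Set.Ico (0:ℝ) 1,
      Tinv (T x) = x ∧ T (Tinv x) = x ∧ Tinv x ∈ Set.Ico (0:ℝ) 1) (j : ℕ) :
    ∀ x ∈ Set.Ico (0:ℝ) 1, ∃ a b : ℝ, IsGap (partPts r β Tinv j) a b ∧ a ≤ x ∧ x < b := by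
  classical
  intro x hx
  set Q := partFinset r β Tinv j with hQ
  have hcoe := coe_partFinset r β Tinv j
  have h0 : (0:ℝ) ∈ Q := by simp [hQ, partFinset]
  have h1 : (1:ℝ) ∈ Q := by simp [hQ, partFinset]
  have hnea : (Q.filter (fun z => z ≤ x)).Nonempty := ⟨0, by simp [Finset.mem_filter, h0, hx.1]⟩
  have hneb : (Q.filter (fun z => x < z)).Nonempty := ⟨1, by simp [Finset.mem_filter, h1, hx.2]⟩
  set a := (Q.filter (fun z => z ≤ x)).max' hnea with ha
  set b := (Q.filter (fun z => x < z)).min' hneb with hb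
  have hamem : a ∈ Q.filter (fun z => z ≤ x) := Finset.max'_mem _ hnea
  have hbmem : b ∈ Q.filter (fun z => x < z) := Finset.min'_mem _ hneb
  rw [Finset.mem_filter] at hamem hbmem
  refine ⟨a, b, ⟨?_, ?_, lt_of_le_of_lt hamem.2 hbmem.2, ?_⟩, hamem.2, hbmem.2⟩
  · rw [← hcoe]; exact hamem.1
  · rw [← hcoe]; exact hbmem.1
  · intro z hz
    rw [← hcoe, Finset.mem_coe] at hz
    rcases le_or_gt z x with h' | h'
    · exact Or.inl (Finset.le_max' _ z (by simp [Finset.mem_filter, hz, h', hQ]))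
    · exact Or.inr (Finset.min'_le _ z (by simp [Finset.mem_filter, hz, h', hQ]))

end Dyn

section Trans

variable (r : ℕ) (β : ℕ → ℝ) (T Tinv : ℝ → ℝ)

/-- translation lemma : on a gap of `partPts j`, the iterates `T^[l]`, `l < j`,
are translations. -/
lemma atom_translate
    (hβ0 : β 0 = 0) (hβr : β r = 1)
    (hβmono : ∀ i j : ℕ, i < j → j ≤ r → β i < β j) (hr : 2 ≤ r)
    (hTbij : Set.BijOn T (Set.Ico 0 1) (Set.Ico 0 1))
    (hTtrans : ∀ i : ℕ, i < r → ∃ v : ℝ, ∀ x ∈ Set.Ico (β i) (β (i + 1)), T x = x + v)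
    (hTinv : ∀ x ∈ Set.Ico (0 : ℝ) 1,
      Tinv (T x) = x ∧ T (Tinv x) = x ∧ Tinv x ∈ Set.Ico (0 : ℝ) 1)
    (j : ℕ) (a b : ℝ) (hgapab : IsGap (partPts r β Tinv j) a b) :
    ∀ l < j, ∀ x ∈ Set.Ico a b, T^[l] x = T^[l] a + (x - a) := by
  have hsub := partPts_subset r β T Tinv hβ0 hβr hβmono hr hTinv j
  have ha01 := hsub hgapab.1
  have hb01 := hsub hgapab.2.1
  have hab : Set.Ico a b ⊆ Set.Ico (0:ℝ) 1 := fun y hy =>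
    ⟨le_trans ha01.1 hy.1, lt_of_lt_of_le hy.2 hb01.2⟩
  have haI : a ∈ Set.Ico (0:ℝ) 1 := hab ⟨le_rfl, hgapab.2.2.1⟩
  intro l
  induction l with
  | zero => intro _ x _; simp
  | succ l ih =>
    intro hlj x hx
    have hl' : l < j := Nat.lt_of_succ_lt hlj
    have ihl := ih hl'
    -- piece containing T^[l] a
    obtain ⟨m, hm, hmem⟩ := piece_exists r β hβ0 hβr hβmono (T^[l] a)
      (T_iter_mem T hTbij.mapsTo a haI l)
    -- all of the atom stays in the same piece
    have key : ∀ y ∈ Set.Ico a b, T^[l] y ∈ Set.Ico (β m) (β (m + 1)) := by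
      intro y hy
      have hTy : T^[l] y = T^[l] a + (y - a) := ihl y hy
      have hylo : β m ≤ T^[l] y := by rw [hTy]; linarith [hmem.1, hy.1]
      refine ⟨hylo, ?_⟩
      by_contra hcon
      push_neg at hcon
      -- crossing point
      have hyI : T^[l] y ∈ Set.Ico (0:ℝ) 1 := T_iter_mem T hTbij.mapsTo y (hab hy) l
      have hm1r : m + 1 < r := by
        rcases Nat.lt_or_ge (m+1) r with h | h
        · exact h
        · exfalso
          have : m + 1 = r := by omega
          rw [this, hβr] at hcon
          linarith [hyI.2]
      set z := a + (β (m+1) - T^[l] a) with hz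
      have hza : a < z := by
        have := hmem.2; rw [hz]; linarith
      have hzy : z ≤ y := by
        rw [hTy] at hcon; rw [hz]; linarith
      have hzb : z ∈ Set.Ico a b := ⟨le_of_lt hza, lt_of_le_of_lt hzy hy.2⟩
      have hTz : T^[l] z = β (m+1) := by
        rw [ihl z hzb, hz]; ring
      have hzI : z ∈ Set.Ico (0:ℝ) 1 := hab hzb
      have hzinv : z = Tinv^[l] (β (m+1)) := by
        rw [← hTz, iter_left_inv T Tinv hTbij.mapsTo hTinv z hzI l]
      have hzP : z ∈ partPts r β Tinv j := by
        right
        exact ⟨m+1, l, by omega, hm1r, hl', hzinv⟩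
      rcases hgapab.2.2.2 z hzP with h | h
      · linarith
      · linarith [hzb.2]
    obtain ⟨v, hv⟩ := hTtrans m hm
    rw [Function.iterate_succ_apply' T l x, Function.iterate_succ_apply' T l a,
      hv _ (key x hx), hv _ (key a ⟨le_rfl, hgapab.2.2.1⟩), ihl x hx]
    ring

/-- main pointwise counting bound -/
lemma count_ge
    (hβ0 : β 0 = 0) (hβr : β r = 1)
    (hβmono : ∀ i j : ℕ, i < j → j ≤ r → β i < β j) (hr : 2 ≤ r)
    (hTbij : Set.BijOn T (Set.Ico 0 1) (Set.Ico 0 1))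
    (hTtrans : ∀ i : ℕ, i < r → ∃ v : ℝ, ∀ x ∈ Set.Ico (β i) (β (i + 1)), T x = x + v)
    (hTinv : ∀ x ∈ Set.Ico (0 : ℝ) 1,
      Tinv (T x) = x ∧ T (Tinv x) = x ∧ Tinv x ∈ Set.Ico (0 : ℝ) 1)
    (c : ℝ) (hc : 0 < c)
    (hbal : (∀ j : ℕ, 1 ≤ j → ∀ a b : ℝ, IsGap (partPts r β Tinv j) a b →
        1 / (c * j) ≤ b - a ∧ b - a ≤ c / j) ∧
      (∀ j : ℕ, 1 ≤ j → ∀ i : ℕ, i < r → ∀ k : ℕ, k < j →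
        ∀ a b : ℝ, IsGap (partPts2 β T Tinv i k j) a b →
          1 / (c * j) ≤ b - a ∧ b - a ≤ c / j))
    (u v : ℝ) (h0u : 0 ≤ u) (huv : u < v) (hv1 : v ≤ 1)
    (j : ℕ) (hj : 1 ≤ j) (hcj : c / j ≤ v - u) (x : ℝ) (hx : x ∈ Set.Ico (0:ℝ) 1) :
    (j:ℝ) * (v - u) / c - 4 ≤
      (((Finset.range j).filter (fun l => T^[l] x ∈ Set.Ico u v)).card : ℝ) := by
  classical
  have hjpos : (0:ℝ) < j := by exact_mod_cast hj
  have hgpos : (0:ℝ) < c / j := div_pos hc hjpos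
  obtain ⟨a, b, hgapab, hax, hxb⟩ := exists_atom r β T Tinv hβ0 hβr hβmono hr hTinv j x hx
  have hba : b - a ≤ c / j := (hbal.1 j hj a b hgapab).2
  -- representation of a
  have harep : ∃ i k : ℕ, i < r ∧ k < j ∧ a = T^[0] (Tinv^[k] (β i)) ∨ True := ⟨0,0,by tauto⟩
  obtain ⟨i, k, hir, hkj, haik⟩ :
      ∃ i k : ℕ, i < r ∧ k < j ∧ a = Tinv^[k] (β i) := by
    rcases hgapab.1 with h | ⟨i, k, h1i, hir, hkj, h⟩
    · rcases h with h | h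
      · exact ⟨0, 0, by omega, hj, by simpa [hβ0] using h⟩
      · exfalso
        rw [Set.mem_singleton_iff] at h
        have := hgapab.2.2.1
        have hb1 := (partPts_subset r β T Tinv hβ0 hβr hβmono hr hTinv j hgapab.2.1).2
        rw [h] at this
        linarith
    · exact ⟨i, k, hir, hkj, h⟩
  set y : ℕ → ℝ := fun l => T^[l] (Tinv^[k] (β i)) with hy
  have hya : ∀ l, y l = T^[l] a := by intro l; rw [haik]
  -- gap bound for Q
  set Q := partFinset2 β T Tinv i k j with hQ
  have hcoe := coe_partFinset2 β T Tinv i k j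
  have hgapQ : ∀ p q : ℝ, IsGap (↑Q) p q → q - p ≤ c / j := by
    intro p q hpq
    rw [hQ, hcoe] at hpq
    exact (hbal.2 j hj i hir k hkj p q hpq).2
  have h0Q : (0:ℝ) ∈ Q := by simp [hQ, partFinset2]
  have h1Q : (1:ℝ) ∈ Q := by simp [hQ, partFinset2]
  set w := v - c / j with hw
  have huw : u ≤ w := by rw [hw]; linarith
  have hw1 : w ≤ 1 := by rw [hw]; linarith
  have hcount := gap_count Q h0Q h1Q (c/j) hgpos hgapQ u w h0u hw1 huw
  set P := Q.filter (fun q => q ∈ Set.Icc u w) with hP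
  -- P is almost contained in the orbit points
  set YL := (Finset.range j).filter (fun l => y l ∈ Set.Icc u w) with hYL
  have hPsub : P ⊆ insert 0 (insert 1 (YL.image y)) := by
    intro q hq
    rw [hP, Finset.mem_filter] at hq
    have hqQ : q ∈ (Q : Set ℝ) := hq.1
    rw [hcoe] at hqQ
    rcases hqQ with h | ⟨l, hl, rfl⟩
    · rcases h with h | h
      · simp [h]
      · rw [Set.mem_singleton_iff] at h; simp [h]
    · apply Finset.mem_insert_of_mem
      apply Finset.mem_insert_of_mem
      exact Finset.mem_image_of_mem y (by rw [hYL, Finset.mem_filter, Finset.mem_range]; exact ⟨hl, hq.2⟩)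
  have hcard1 : P.card ≤ YL.card + 2 := by
    calc P.card ≤ (insert (0:ℝ) (insert 1 (YL.image y))).card := Finset.card_le_card hPsub
    _ ≤ (insert (1:ℝ) (YL.image y)).card + 1 := Finset.card_insert_le _ _
    _ ≤ YL.card + 2 := by
        have h1 := Finset.card_insert_le (1:ℝ) (YL.image y)
        have h2 := Finset.card_image_le (s := YL) (f := y)
        omega
  -- orbit point in [u,w] forces T^[l] x ∈ [u,v)
  have htrans := atom_translate r β T Tinv hβ0 hβr hβmono hr hTbij hTtrans hTinv j a b hgapab
  have hcard2 : YL.card ≤ ((Finset.range j).filter (fun l => T^[l] x ∈ Set.Ico u v)).card := by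
    apply Finset.card_le_card
    intro l hl
    rw [hYL, Finset.mem_filter, Finset.mem_range, Set.mem_Icc] at hl
    rw [Finset.mem_filter, Finset.mem_range]
    refine ⟨hl.1, ?_⟩
    have hTl : T^[l] x = T^[l] a + (x - a) := htrans l hl.1 x ⟨hax, hxb⟩
    have hyl := hya l
    constructor
    · rw [hTl, ← hyl]; linarith [hl.2.1, hax]
    · rw [hTl, ← hyl]
      have : x - a < b - a := by linarith
      have h2 := hl.2.2
      rw [hw] at h2
      linarith
  -- arithmetic
  have hNc : ((P.card : ℝ)) ≥ (w - u) * (j / c) - 1 := by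
    have hjc : (0:ℝ) < j / c := div_pos hjpos hc
    have hmul : (w - u) * (j/c) ≤ ((P.card : ℝ) + 1) * ((c/j) * (j/c)) := by
      calc (w - u) * (j/c) ≤ (((P.card : ℝ) + 1) * (c/j)) * (j/c) := by
            apply mul_le_mul_of_nonneg_right hcount (le_of_lt hjc)
      _ = ((P.card : ℝ) + 1) * ((c/j) * (j/c)) := by ring
    have hone : (c/j) * (j/c) = 1 := by
      field_simp
    rw [hone, mul_one] at hmul
    linarith
  have hwu : (w - u) * (j / c) = (j:ℝ) * (v - u) / c - 1 := by
    rw [hw]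
    field_simp
    ring
  have hfin : ((P.card : ℝ)) ≤ (((Finset.range j).filter
      (fun l => T^[l] x ∈ Set.Ico u v)).card : ℝ) + 2 := by
    have := hcard1
    have := hcard2
    push_cast
    have hc1 : (P.card : ℝ) ≤ (YL.card : ℝ) + 2 := by exact_mod_cast hcard1
    have hc2 : (YL.card : ℝ) ≤ (((Finset.range j).filter
        (fun l => T^[l] x ∈ Set.Ico u v)).card : ℝ) := by exact_mod_cast hcard2
    linarith
  rw [hwu] at hNc
  linarith

section MeasureLemmas

open scoped ENNReal

/-- lower bound for invariant measures of intervals -/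
lemma interval_lower (T' : ℝ → ℝ) (hT'm : Measurable T') (c : ℝ) (hc : 0 < c)
    (hcount : ∀ u v : ℝ, 0 ≤ u → u < v → v ≤ 1 → ∀ j : ℕ, 1 ≤ j → c / j ≤ v - u →
      ∀ x ∈ Set.Ico (0:ℝ) 1, (j:ℝ) * (v - u) / c - 4 ≤
        (((Finset.range j).filter (fun l => T'^[l] x ∈ Set.Ico u v)).card : ℝ))
    (lam : Measure ℝ) (hprob : IsProbabilityMeasure lam)
    (hlamI : lam (Set.Ico (0:ℝ) 1)ᶜ = 0) (hmap : lam.map T' = lam)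
    (u v : ℝ) (h0u : 0 ≤ u) (huv : u < v) (hv1 : v ≤ 1) :
    ENNReal.ofReal ((v - u) / c) ≤ lam (Set.Ico u v) := by
  classical
  have hlamI1 : lam (Set.Ico (0:ℝ) 1) = 1 := by
    have h := measure_add_measure_compl (μ := lam) (measurableSet_Ico :
      MeasurableSet (Set.Ico (0:ℝ) 1))
    rw [hlamI, add_zero] at h
    rw [h]; exact measure_univ
  have hiter : ∀ l : ℕ, lam.map (T'^[l]) = lam := by
    intro l
    induction l with
    | zero => simp
    | succ l ih =>
      rw [Function.iterate_succ]
      rw [← Measure.map_map (hT'm.iterate l) hT'm, hmap, ih]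
  have hpre : ∀ l : ℕ, lam ((T'^[l]) ⁻¹' (Set.Ico u v)) = lam (Set.Ico u v) := by
    intro l
    rw [← Measure.map_apply (hT'm.iterate l) measurableSet_Ico, hiter l]
  -- main inequality for fixed j
  have key : ∀ j : ℕ, 1 ≤ j → c / j ≤ v - u →
      ENNReal.ofReal ((j:ℝ) * (v - u) / c - 4) ≤ (j : ℝ≥0∞) * lam (Set.Ico u v) := by
    intro j hj hcj
    set F : ℝ → ℝ≥0∞ := fun x => ∑ l ∈ Finset.range j,
      ((T'^[l]) ⁻¹' (Set.Ico u v)).indicator (fun _ => 1) x with hF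
    have hFmeas : ∀ l ∈ Finset.range j, Measurable
        (fun x => ((T'^[l]) ⁻¹' (Set.Ico u v)).indicator (fun _ => (1:ℝ≥0∞)) x) := by
      intro l _
      exact measurable_const.indicator ((hT'm.iterate l) measurableSet_Ico)
    have hFint : ∫⁻ x, F x ∂lam = (j : ℝ≥0∞) * lam (Set.Ico u v) := by
      simp only [hF]
      rw [lintegral_finset_sum _ hFmeas]
      have : ∀ l ∈ Finset.range j, ∫⁻ x, ((T'^[l]) ⁻¹' (Set.Ico u v)).indicator
          (fun _ => (1:ℝ≥0∞)) x ∂lam = lam (Set.Ico u v) := by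
        intro l _
        rw [lintegral_indicator ((hT'm.iterate l) measurableSet_Ico), setLIntegral_one, hpre l]
      rw [Finset.sum_congr rfl this]
      simp [Finset.sum_const, Finset.card_range, mul_comm]
    -- pointwise bound
    have hptwise : ∀ x ∈ Set.Ico (0:ℝ) 1,
        ENNReal.ofReal ((j:ℝ) * (v - u) / c - 4) ≤ F x := by
      intro x hx
      have hFx : F x = (((Finset.range j).filter
          (fun l => T'^[l] x ∈ Set.Ico u v)).card : ℝ≥0∞) := by
        simp only [hF]
        have : ∀ l ∈ Finset.range j, ((T'^[l]) ⁻¹' (Set.Ico u v)).indicator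
            (fun _ => (1:ℝ≥0∞)) x = if T'^[l] x ∈ Set.Ico u v then 1 else 0 := by
          intro l _
          by_cases h : T'^[l] x ∈ Set.Ico u v <;> simp [Set.indicator_apply, h]
        rw [Finset.sum_congr rfl this, Finset.sum_boole]
      rw [hFx]
      have hb := hcount u v h0u huv hv1 j hj hcj x hx
      calc ENNReal.ofReal ((j:ℝ) * (v - u) / c - 4)
          ≤ ENNReal.ofReal (((Finset.range j).filter
            (fun l => T'^[l] x ∈ Set.Ico u v)).card : ℝ) := ENNReal.ofReal_le_ofReal hb
        _ = _ := ENNReal.ofReal_natCast _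
    have hlow : ENNReal.ofReal ((j:ℝ) * (v - u) / c - 4) * lam (Set.Ico (0:ℝ) 1)
        ≤ ∫⁻ x, F x ∂lam := by
      have : (Set.Ico (0:ℝ) 1).indicator (fun _ => ENNReal.ofReal ((j:ℝ) * (v - u) / c - 4))
          ≤ F := by
        intro x
        by_cases hx : x ∈ Set.Ico (0:ℝ) 1
        · rw [Set.indicator_of_mem hx]; exact hptwise x hx
        · rw [Set.indicator_of_notMem hx]; exact zero_le
      calc ENNReal.ofReal ((j:ℝ) * (v - u) / c - 4) * lam (Set.Ico (0:ℝ) 1)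
          = ∫⁻ x, (Set.Ico (0:ℝ) 1).indicator
              (fun _ => ENNReal.ofReal ((j:ℝ) * (v - u) / c - 4)) x ∂lam := by
            rw [lintegral_indicator measurableSet_Ico, setLIntegral_const]
        _ ≤ ∫⁻ x, F x ∂lam := lintegral_mono this
    rw [hlamI1, mul_one] at hlow
    rw [← hFint]
    exact hlow
  -- pass to the limit
  have hne : lam (Set.Ico u v) ≠ ⊤ := measure_ne_top _ _
  set L := (lam (Set.Ico u v)).toReal with hL
  have hreal : ∀ j : ℕ, 1 ≤ j → c / j ≤ v - u → (v - u) / c ≤ L + 4 / j := by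
    intro j hj hcj
    have hk := key j hj hcj
    have hjne : ((j : ℝ≥0∞) * lam (Set.Ico u v)) ≠ ⊤ :=
      ENNReal.mul_ne_top (by simp) hne
    have h1 := (ENNReal.ofReal_le_iff_le_toReal hjne).mp hk
    rw [ENNReal.toReal_mul] at h1
    have hjj : ((j:ℝ≥0∞)).toReal = (j:ℝ) := by simp
    rw [hjj, ← hL] at h1
    have hjpos : (0:ℝ) < j := by exact_mod_cast hj
    have h3 : (j:ℝ) * ((v-u)/c) ≤ (j:ℝ) * (L + 4/j) := by
      have h4 : (j:ℝ)*(L + 4/j) = j*L + 4 := by field_simp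
      have h5 : (j:ℝ) * ((v-u)/c) = (j:ℝ)*(v-u)/c := by ring
      rw [h4, h5]; linarith
    exact le_of_mul_le_mul_left h3 hjpos
  have htend : Tendsto (fun j : ℕ => L + 4 / (j:ℝ)) atTop (nhds (L + 0)) :=
    tendsto_const_nhds.add (tendsto_const_div_atTop_nhds_zero_nat 4)
  have hev : ∀ᶠ j : ℕ in atTop, (v-u)/c ≤ L + 4/(j:ℝ) := by
    rw [eventually_atTop]
    refine ⟨max 1 ⌈c / (v-u)⌉₊, fun j hjge => ?_⟩
    have hj1 : 1 ≤ j := le_trans (le_max_left _ _) hjge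
    have hjceil : ⌈c/(v-u)⌉₊ ≤ j := le_trans (le_max_right _ _) hjge
    have hvu : 0 < v - u := by linarith
    have hjpos : (0:ℝ) < j := by exact_mod_cast hj1
    have hle : c/(v-u) ≤ (j:ℝ) := le_trans (Nat.le_ceil _) (by exact_mod_cast hjceil)
    have hcj : c / j ≤ v - u := by
      rw [div_le_iff₀ hjpos]
      rw [div_le_iff₀ hvu] at hle
      linarith
    exact hreal j hj1 hcj
  have hfin : (v-u)/c ≤ L := by
    have := ge_of_tendsto htend hev
    rw [add_zero] at this
    exact this
  calc ENNReal.ofReal ((v-u)/c) ≤ ENNReal.ofReal L := ENNReal.ofReal_le_ofReal hfin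
    _ = lam (Set.Ico u v) := ENNReal.ofReal_toReal hne

end MeasureLemmas

section Borel

open scoped ENNReal

lemma open_bound (c : ℝ) (hc1 : 1 ≤ c)
    (lam : Measure ℝ) (hprob : IsProbabilityMeasure lam)
    (hint : ∀ u v : ℝ, 0 ≤ u → u < v → v ≤ 1 →
      ENNReal.ofReal ((v - u) / c) ≤ lam (Set.Ico u v))
    (U : Set ℝ) (hU : IsOpen U) :
    volume (U ∩ Set.Ico (0:ℝ) 1) ≤ ENNReal.ofReal c * lam U := by
  classical
  have hc0 : 0 < c := lt_of_lt_of_le zero_lt_one hc1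
  rcases Set.eq_empty_or_nonempty Uᶜ with hUc | hUc
  · have hUuniv : U = Set.univ := by rw [← Set.compl_empty_iff]; exact hUc
    rw [hUuniv, Set.univ_inter, measure_univ (μ := lam), Real.volume_Ico]
    calc ENNReal.ofReal (1 - 0) = ENNReal.ofReal 1 := by norm_num
      _ ≤ ENNReal.ofReal c := ENNReal.ofReal_le_ofReal hc1
      _ = ENNReal.ofReal c * 1 := by rw [mul_one]
  · set E : ℕ → Set ℝ := fun n =>
      (U ∩ Set.Ico (0:ℝ) 1) ∩ {x | Metric.infDist x Uᶜ ≤ 1 / ((n:ℝ)+1)} with hE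
    have hstep : ∀ n : ℕ, volume (U ∩ Set.Ico (0:ℝ) 1)
        ≤ ENNReal.ofReal c * lam U + volume (E n) := by
      intro n
      set m : ℝ := (n:ℝ) + 1 with hm
      have hmpos : (0:ℝ) < m := by positivity
      set J : ℕ → Set ℝ := fun k => Set.Ico ((k:ℝ)/m) (((k:ℝ)+1)/m) with hJdef
      set G : Finset ℕ := (Finset.range (n+1)).filter (fun k => J k ⊆ U) with hG
      have hcover : U ∩ Set.Ico (0:ℝ) 1 ⊆ (⋃ k ∈ G, J k) ∪ E n := by
        intro x hx
        obtain ⟨hxU, hxI⟩ := hx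
        set k : ℕ := ⌊x * m⌋.toNat with hk
        have hxm0 : 0 ≤ x * m := mul_nonneg hxI.1 (le_of_lt hmpos)
        have hkfl : (k:ℝ) = ⌊x * m⌋ := by
          rw [hk]; exact_mod_cast Int.toNat_of_nonneg (Int.floor_nonneg.mpr hxm0)
        have hk1 : (k:ℝ) ≤ x * m := by rw [hkfl]; exact Int.floor_le _
        have hk2 : x * m < (k:ℝ) + 1 := by rw [hkfl]; exact Int.lt_floor_add_one _
        have hxJ : x ∈ J k := by
          rw [hJdef]
          exact ⟨by rw [div_le_iff₀ hmpos]; linarith, by rw [lt_div_iff₀ hmpos]; linarith⟩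
        have hkn : k < n + 1 := by
          have h1 : x * m < m := by nlinarith [hxI.2]
          have h2 : (k:ℝ) < m := lt_of_le_of_lt hk1 h1
          rw [hm] at h2
          exact_mod_cast h2
        by_cases hsub : J k ⊆ U
        · have hkG : k ∈ G := by
            rw [hG]
            exact Finset.mem_filter.mpr ⟨Finset.mem_range.mpr hkn, hsub⟩
          exact Or.inl (Set.mem_biUnion hkG hxJ)
        · right
          rw [hE]
          refine ⟨⟨hxU, hxI⟩, ?_⟩
          rw [Set.not_subset] at hsub
          obtain ⟨y, hyJ, hyU⟩ := hsub
          have hdist : dist x y ≤ 1 / m := by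
            rw [Real.dist_eq, abs_le]
            rw [hJdef] at hyJ
            obtain ⟨h3, h4⟩ := hyJ
            obtain ⟨h1, h2⟩ := hxJ
            rw [div_le_iff₀ hmpos] at h1 h3
            rw [lt_div_iff₀ hmpos] at h2 h4
            have hxy1 : (x - y) * m ≤ 1 := by nlinarith
            have hxy2 : -(1:ℝ) ≤ (x - y) * m := by nlinarith
            constructor
            · have : (-1:ℝ)/m ≤ x - y := by
                rw [div_le_iff₀ hmpos]; linarith
              calc -(1/m) = (-1:ℝ)/m := by ring
                _ ≤ x - y := this
            · rw [le_div_iff₀ hmpos]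
              linarith
          calc Metric.infDist x Uᶜ ≤ dist x y := Metric.infDist_le_dist_of_mem hyU
            _ ≤ 1 / ((n:ℝ)+1) := by rw [← hm]; exact hdist
      have hdisj : (↑G : Set ℕ).PairwiseDisjoint J := by
        have key : ∀ a b : ℕ, a < b → Disjoint (J a) (J b) := by
          intro a b hab
          rw [hJdef]
          apply Set.Ico_disjoint_Ico.mpr
          have : ((a:ℝ)+1)/m ≤ (b:ℝ)/m := by
            apply div_le_div_of_nonneg_right ?h hmpos.le
            case h => exact_mod_cast Nat.succ_le_of_lt hab
          rw [min_le_iff]; left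
          rw [le_max_iff]; right
          exact this
        intro k1 _ k2 _ hne
        rcases Nat.lt_or_ge k1 k2 with h | h
        · exact key k1 k2 h
        · have : k2 < k1 := by omega
          exact (key k2 k1 this).symm
      have hJmeas : ∀ k : ℕ, MeasurableSet (J k) := fun k => measurableSet_Ico
      have hJvol : ∀ k ∈ G, volume (J k) ≤ ENNReal.ofReal c * lam (J k) := by
        intro k hkG
        rw [hG, Finset.mem_filter, Finset.mem_range] at hkG
        have h0u : (0:ℝ) ≤ (k:ℝ)/m := by positivity
        have huv : (k:ℝ)/m < ((k:ℝ)+1)/m := by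
          rw [div_lt_div_iff_of_pos_right hmpos]
          linarith
        have hv1 : ((k:ℝ)+1)/m ≤ 1 := by
          rw [div_le_one hmpos, hm]
          have : (k:ℝ) + 1 ≤ (n:ℝ) + 1 := by
            have := hkG.1; push_cast; exact_mod_cast Nat.succ_le_of_lt this
          exact this
        have hi := hint ((k:ℝ)/m) (((k:ℝ)+1)/m) h0u huv hv1
        rw [hJdef]
        rw [Real.volume_Ico]
        calc ENNReal.ofReal (((k:ℝ)+1)/m - (k:ℝ)/m)
            = ENNReal.ofReal (c * ((((k:ℝ)+1)/m - (k:ℝ)/m) / c)) := by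
              rw [mul_div_cancel₀ _ (ne_of_gt hc0)]
          _ = ENNReal.ofReal c * ENNReal.ofReal ((((k:ℝ)+1)/m - (k:ℝ)/m) / c) :=
              ENNReal.ofReal_mul (le_of_lt hc0)
          _ ≤ ENNReal.ofReal c * lam (Set.Ico ((k:ℝ)/m) (((k:ℝ)+1)/m)) :=
              mul_le_mul_right hi _
      have hUsub : (⋃ k ∈ G, J k) ⊆ U := by
        apply Set.iUnion₂_subset
        intro k hkG
        rw [hG, Finset.mem_filter] at hkG
        exact hkG.2
      calc volume (U ∩ Set.Ico (0:ℝ) 1)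
          ≤ volume ((⋃ k ∈ G, J k) ∪ E n) := measure_mono hcover
        _ ≤ volume (⋃ k ∈ G, J k) + volume (E n) := measure_union_le _ _
        _ ≤ (∑ k ∈ G, volume (J k)) + volume (E n) := by
            exact add_le_add_left (measure_biUnion_finset_le G J) _
        _ ≤ (∑ k ∈ G, ENNReal.ofReal c * lam (J k)) + volume (E n) := by
            exact add_le_add_left (Finset.sum_le_sum hJvol) _
        _ = ENNReal.ofReal c * (∑ k ∈ G, lam (J k)) + volume (E n) := by
            rw [Finset.mul_sum]
        _ = ENNReal.ofReal c * lam (⋃ k ∈ G, J k) + volume (E n) := by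
            rw [measure_biUnion_finset hdisj (fun k _ => hJmeas k)]
        _ ≤ ENNReal.ofReal c * lam U + volume (E n) := by
            exact add_le_add_left (mul_le_mul_right (measure_mono hUsub) _) _
    -- the exceptional sets shrink to ∅
    have hmeasE : ∀ n : ℕ, MeasurableSet (E n) := by
      intro n
      apply (hU.measurableSet.inter measurableSet_Ico).inter
      exact (Metric.continuous_infDist_pt Uᶜ).measurable measurableSet_Iic
    have hanti : Antitone E := by
      intro a b hab
      apply Set.inter_subset_inter_right
      intro x hx
      rw [Set.mem_setOf_eq] at hx ⊢
      have : 1 / ((b:ℝ)+1) ≤ 1 / ((a:ℝ)+1) := by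
        apply one_div_le_one_div_of_le (by positivity)
        have : (a:ℝ) ≤ b := by exact_mod_cast hab
        linarith
      linarith
    have hinter : (⋂ n, E n) = ∅ := by
      rw [Set.eq_empty_iff_forall_notMem]
      intro x hx
      rw [Set.mem_iInter] at hx
      have hxU : x ∈ U := (hx 0).1.1
      have hd0 : Metric.infDist x Uᶜ ≤ 0 := by
        apply ge_of_tendsto (tendsto_one_div_add_atTop_nhds_zero_nat)
        exact Filter.Eventually.of_forall (fun n => (hx n).2)
      have hd : Metric.infDist x Uᶜ = 0 := le_antisymm hd0 Metric.infDist_nonneg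
      have : x ∈ Uᶜ := (hU.isClosed_compl.mem_iff_infDist_zero hUc).mpr hd
      exact this hxU
    have hfinE : volume (E 0) ≠ ⊤ := by
      apply ne_of_lt
      calc volume (E 0) ≤ volume (Set.Ico (0:ℝ) 1) := by
            apply measure_mono
            intro x hx
            exact hx.1.2
        _ < ⊤ := by rw [Real.volume_Ico]; exact ENNReal.ofReal_lt_top
    have htend : Tendsto (fun n => volume (E n)) atTop (nhds 0) := by
      have := tendsto_measure_iInter_atTop (μ := volume)
        (fun n => (hmeasE n).nullMeasurableSet) hanti ⟨0, hfinE⟩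
      rw [hinter] at this
      simpa [Function.comp_def] using this
    have : Tendsto (fun n => ENNReal.ofReal c * lam U + volume (E n)) atTop
        (nhds (ENNReal.ofReal c * lam U + 0)) := tendsto_const_nhds.add htend
    rw [add_zero] at this
    exact ge_of_tendsto this (Filter.Eventually.of_forall hstep)

lemma borel_bound (c : ℝ) (hc1 : 1 ≤ c)
    (lam : Measure ℝ) (hprob : IsProbabilityMeasure lam)
    (hint : ∀ u v : ℝ, 0 ≤ u → u < v → v ≤ 1 →
      ENNReal.ofReal ((v - u) / c) ≤ lam (Set.Ico u v))
    (A : Set ℝ) :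
    volume (A ∩ Set.Ico (0:ℝ) 1) ≤ ENNReal.ofReal c * lam A := by
  have hc0 : 0 < c := lt_of_lt_of_le zero_lt_one hc1
  have hcne : ENNReal.ofReal c ≠ 0 := by
    simp [ENNReal.ofReal_eq_zero]; linarith
  apply ENNReal.le_of_forall_pos_le_add
  intro ε hε _
  have hδ : ((ε:ℝ≥0∞) / ENNReal.ofReal c) ≠ 0 := by
    apply ENNReal.div_ne_zero.mpr
    exact ⟨by exact_mod_cast ne_of_gt hε, ENNReal.ofReal_ne_top⟩
  obtain ⟨U, hAU, hUopen, hlamU⟩ := Set.exists_isOpen_lt_add A (measure_ne_top lam A) hδ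
  calc volume (A ∩ Set.Ico (0:ℝ) 1) ≤ volume (U ∩ Set.Ico (0:ℝ) 1) :=
        measure_mono (Set.inter_subset_inter_left _ hAU)
    _ ≤ ENNReal.ofReal c * lam U := open_bound c hc1 lam hprob hint U hUopen
    _ ≤ ENNReal.ofReal c * (lam A + ↑ε / ENNReal.ofReal c) :=
        mul_le_mul_right (le_of_lt hlamU) _
    _ = ENNReal.ofReal c * lam A + ENNReal.ofReal c * (↑ε / ENNReal.ofReal c) := mul_add _ _ _
    _ = ENNReal.ofReal c * lam A + ↑ε := by
        rw [ENNReal.mul_div_cancel hcne ENNReal.ofReal_ne_top]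

end Borel

section Unique

open scoped ENNReal

/-- an invariant set (mod null) gives an invariant restricted measure -/
lemma restrict_invariant (T' : ℝ → ℝ) (hT'm : Measurable T') (ρ : Measure ℝ)
    (hρT : ρ.map T' = ρ) (S : Set ℝ) (hS : MeasurableSet S)
    (hSae : T' ⁻¹' S =ᵐ[ρ] S) : (ρ.restrict S).map T' = ρ.restrict S := by
  ext B hB
  rw [Measure.map_apply hT'm hB, Measure.restrict_apply (hT'm hB),
    Measure.restrict_apply hB]
  have h1 : (T' ⁻¹' B ∩ S : Set ℝ) =ᵐ[ρ] (T' ⁻¹' B ∩ T' ⁻¹' S : Set ℝ) := by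
    rw [eventuallyEq_set] at hSae ⊢
    filter_upwards [hSae] with x hx
    simp only [Set.mem_inter_iff, Set.mem_preimage] at *
    tauto
  rw [measure_congr h1, ← Set.preimage_inter, ← Measure.map_apply hT'm (hB.inter hS), hρT]

lemma invariant_unique (T' : ℝ → ℝ) (hT'm : Measurable T') (Tinv' : ℝ → ℝ)
    (hTinv'm : Measurable Tinv')
    (hlinv : ∀ x ∈ Set.Ico (0:ℝ) 1, Tinv' (T' x) = x)
    (hT'maps : Set.MapsTo T' (Set.Ico (0:ℝ) 1) (Set.Ico (0:ℝ) 1))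
    (c : ℝ) (hc1 : 1 ≤ c)
    (hbound : ∀ lam : Measure ℝ, IsProbabilityMeasure lam → lam (Set.Ico (0:ℝ) 1)ᶜ = 0 →
      lam.map T' = lam → ∀ A : Set ℝ,
        volume (A ∩ Set.Ico (0:ℝ) 1) ≤ ENNReal.ofReal c * lam A)
    (μ ν : Measure ℝ) (hμp : IsProbabilityMeasure μ) (hνp : IsProbabilityMeasure ν)
    (hμI : μ (Set.Ico (0:ℝ) 1)ᶜ = 0) (hνI : ν (Set.Ico (0:ℝ) 1)ᶜ = 0)
    (hμT : μ.map T' = μ) (hνT : ν.map T' = ν) : μ = ν := by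
  classical
  set I : Set ℝ := Set.Ico (0:ℝ) 1 with hI
  set ρ : Measure ℝ := (2:ℝ≥0∞)⁻¹ • (μ + ν) with hρ
  have hρuniv : ρ Set.univ = 1 := by
    rw [hρ]
    simp only [Measure.smul_apply, Measure.add_apply, smul_eq_mul, measure_univ]
    rw [show (1:ℝ≥0∞) + 1 = 2 by norm_num, ENNReal.inv_mul_cancel] <;> norm_num
  have hρprob : IsProbabilityMeasure ρ := ⟨hρuniv⟩
  have hρI : ρ Iᶜ = 0 := by
    rw [hρ]
    simp [hμI, hνI]
  have hρT : ρ.map T' = ρ := by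
    rw [hρ, Measure.map_smul, Measure.map_add _ _ hT'm, hμT, hνT]
  have hac : μ ≪ ρ := by
    intro s hs
    rw [hρ] at hs
    simp only [Measure.smul_apply, Measure.add_apply, smul_eq_mul] at hs
    have h2 : μ s + ν s = 0 := by
      rcases mul_eq_zero.mp hs with h' | h'
      · exfalso
        exact absurd h' (by norm_num)
      · exact h'
    exact (add_eq_zero.mp h2).1
  set f : ℝ → ℝ≥0∞ := μ.rnDeriv ρ with hf
  have hfmeas : Measurable f := Measure.measurable_rnDeriv μ ρ
  have hwd : ρ.withDensity f = μ := Measure.withDensity_rnDeriv_eq μ ρ hac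
  have hμB : ∀ B : Set ℝ, MeasurableSet B → ∫⁻ x in B, f x ∂ρ = μ B := by
    intro B hB
    rw [← hwd, withDensity_apply f hB]
  -- invariance of the density
  have hfT : (fun x => f (T' x)) =ᵐ[ρ] f := by
    apply ae_eq_of_forall_setLIntegral_eq_of_sigmaFinite (hfmeas.comp hT'm) hfmeas
    intro C hC _
    -- first: equality over preimages
    have key1 : ∀ B : Set ℝ, MeasurableSet B →
        ∫⁻ x in T' ⁻¹' B, f (T' x) ∂ρ = ∫⁻ x in T' ⁻¹' B, f x ∂ρ := by
      intro B hB
      have h1 : ∫⁻ x in T' ⁻¹' B, f (T' x) ∂ρ = ∫⁻ y in B, f y ∂(ρ.map T') :=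
        (setLIntegral_map hB hfmeas hT'm).symm
      rw [hρT] at h1
      rw [h1, hμB B hB, hμB _ (hT'm hB)]
      rw [← Measure.map_apply hT'm hB, hμT]
    -- convert C to a preimage modulo null sets
    set B : Set ℝ := Tinv' ⁻¹' C with hBdef
    have hBmeas : MeasurableSet B := hTinv'm hC
    have haeCB : (T' ⁻¹' B : Set ℝ) =ᵐ[ρ] C := by
      rw [eventuallyEq_set]
      have hae : ∀ᵐ x ∂ρ, x ∈ I := by
        rw [ae_iff]
        have he : {x : ℝ | ¬ x ∈ I} = Iᶜ := rfl
        rw [he]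
        exact hρI
      filter_upwards [hae] with x hxI
      simp only [Set.mem_preimage, hBdef]
      rw [hlinv x hxI]
    calc ∫⁻ x in C, f (T' x) ∂ρ = ∫⁻ x in T' ⁻¹' B, f (T' x) ∂ρ :=
          (setLIntegral_congr haeCB).symm
      _ = ∫⁻ x in T' ⁻¹' B, f x ∂ρ := key1 B hBmeas
      _ = ∫⁻ x in C, f x ∂ρ := setLIntegral_congr haeCB
  have hftot : ∫⁻ x, f x ∂ρ = 1 := by
    have := hμB Set.univ MeasurableSet.univ
    rw [setLIntegral_univ] at this
    rw [this, measure_univ]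
  set A : Set ℝ := {x | 1 < f x} with hA
  have hAmeas : MeasurableSet A := measurableSet_lt measurable_const hfmeas
  have hAae : (T' ⁻¹' A : Set ℝ) =ᵐ[ρ] A := by
    rw [eventuallyEq_set]
    filter_upwards [hfT] with x hx
    simp only [Set.mem_preimage, hA, Set.mem_setOf_eq, hx]
  by_cases hA0 : ρ A = 0
  · -- f ≤ 1 a.e., hence f = 1 a.e., hence μ = ρ, hence μ = ν
    have hfle : f ≤ᵐ[ρ] fun _ => 1 := by
      rw [EventuallyLE, ae_iff]
      have : {x | ¬ f x ≤ 1} = A := by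
        ext x; simp [hA, not_le]
      rw [this]
      exact hA0
    have hsub : ∫⁻ x, (1 : ℝ≥0∞) - f x ∂ρ = 0 := by
      rw [lintegral_sub hfmeas (by rw [hftot]; norm_num) hfle]
      rw [hftot, lintegral_one, hρuniv, tsub_self]
    have hz : (fun x => (1:ℝ≥0∞) - f x) =ᵐ[ρ] 0 :=
      (lintegral_eq_zero_iff (measurable_const.sub hfmeas)).mp hsub
    have hfeq : f =ᵐ[ρ] fun _ => 1 := by
      filter_upwards [hz, hfle] with x h1 h2
      have : (1:ℝ≥0∞) - f x = 0 := h1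
      have h3 : (1:ℝ≥0∞) ≤ f x := tsub_eq_zero_iff_le.mp this
      exact le_antisymm h2 h3
    have hμρ : μ = ρ := by
      rw [← hwd, withDensity_congr_ae hfeq]
      exact withDensity_one
    -- cancel
    ext B hB
    have h1 : μ B = (2:ℝ≥0∞)⁻¹ * (μ B + ν B) := by
      conv_lhs => rw [hμρ]
      rw [hρ]
      simp only [Measure.smul_apply, Measure.add_apply, smul_eq_mul]
    have h2 : (2:ℝ≥0∞) * μ B = (2:ℝ≥0∞) * ((2:ℝ≥0∞)⁻¹ * (μ B + ν B)) := by rw [← h1]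
    rw [← mul_assoc, ENNReal.mul_inv_cancel (by norm_num) (by norm_num), one_mul] at h2
    have h3 : μ B + μ B = μ B + ν B := by
      rw [← two_mul, h2]
    exact (ENNReal.add_right_inj (measure_ne_top μ B)).mp h3
  · -- both A and Aᶜ have positive measure: contradiction
    exfalso
    have hAc0 : ρ Aᶜ ≠ 0 := by
      intro h0
      have hgt : ∀ᵐ x ∂ρ, 1 < f x := by
        rw [ae_iff]
        have : {x | ¬ 1 < f x} = Aᶜ := by
          ext x; simp [hA]
        rw [this]; exact h0
      have hge : (fun _ => (1:ℝ≥0∞)) ≤ᵐ[ρ] f := hgt.mono fun x hx => le_of_lt hx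
      have hsub : ∫⁻ x, f x - 1 ∂ρ = 0 := by
        rw [lintegral_sub measurable_const
          (by rw [lintegral_one, hρuniv]; norm_num) hge]
        rw [hftot, lintegral_one, hρuniv, tsub_self]
      have hz : (fun x => f x - 1) =ᵐ[ρ] 0 :=
        (lintegral_eq_zero_iff (hfmeas.sub measurable_const)).mp hsub
      have hbad : ∀ᵐ x ∂ρ, False := by
        filter_upwards [hz, hgt] with x h1 h2
        have h3 : f x ≤ 1 := tsub_eq_zero_iff_le.mp h1
        exact absurd h2 (not_lt.2 h3)
      rw [ae_iff] at hbad
      have huniv : ρ Set.univ = 0 := by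
        have he : {a : ℝ | ¬False} = Set.univ := by
          ext x; simp
        rw [he] at hbad
        exact hbad
      rw [huniv] at hρuniv
      exact absurd hρuniv (by norm_num)
    -- normalized restrictions
    set lam1 : Measure ℝ := (ρ A)⁻¹ • ρ.restrict A with hlam1
    set lam2 : Measure ℝ := (ρ Aᶜ)⁻¹ • ρ.restrict Aᶜ with hlam2
    have hρAne : ρ A ≠ ⊤ := measure_ne_top _ _
    have hρAcne : ρ Aᶜ ≠ ⊤ := measure_ne_top _ _
    have hlam1prob : IsProbabilityMeasure lam1 := by
      constructor
      rw [hlam1]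
      simp [Measure.restrict_apply MeasurableSet.univ, Set.univ_inter]
      exact ENNReal.inv_mul_cancel hA0 hρAne
    have hlam2prob : IsProbabilityMeasure lam2 := by
      constructor
      rw [hlam2]
      simp [Measure.restrict_apply MeasurableSet.univ, Set.univ_inter]
      exact ENNReal.inv_mul_cancel hAc0 hρAcne
    have hIcm : MeasurableSet (Iᶜ : Set ℝ) := measurableSet_Ico.compl
    have hlam1I : lam1 Iᶜ = 0 := by
      rw [hlam1]
      simp only [Measure.smul_apply, smul_eq_mul, Measure.restrict_apply hIcm]
      have h0 : ρ (Iᶜ ∩ A) = 0 :=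
        le_antisymm (le_trans (measure_mono Set.inter_subset_left) (le_of_eq hρI)) zero_le
      rw [h0, mul_zero]
    have hlam2I : lam2 Iᶜ = 0 := by
      rw [hlam2]
      simp only [Measure.smul_apply, smul_eq_mul, Measure.restrict_apply hIcm]
      have h0 : ρ (Iᶜ ∩ Aᶜ) = 0 :=
        le_antisymm (le_trans (measure_mono Set.inter_subset_left) (le_of_eq hρI)) zero_le
      rw [h0, mul_zero]
    have hAcae : (T' ⁻¹' Aᶜ : Set ℝ) =ᵐ[ρ] (Aᶜ : Set ℝ) := by
      rw [eventuallyEq_set]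
      rw [eventuallyEq_set] at hAae
      filter_upwards [hAae] with x hx
      simp only [Set.mem_preimage, Set.mem_compl_iff] at *
      tauto
    have hlam1T : lam1.map T' = lam1 := by
      rw [hlam1, Measure.map_smul, restrict_invariant T' hT'm ρ hρT A hAmeas hAae]
    have hlam2T : lam2.map T' = lam2 := by
      rw [hlam2, Measure.map_smul, restrict_invariant T' hT'm ρ hρT Aᶜ hAmeas.compl hAcae]
    have hvol1 : volume (A ∩ I) = 0 := by
      have := hbound lam2 hlam2prob hlam2I hlam2T A
      have h0 : lam2 A = 0 := by
        rw [hlam2]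
        simp only [Measure.smul_apply, smul_eq_mul, Measure.restrict_apply hAmeas]
        rw [Set.inter_compl_self, measure_empty, mul_zero]
      rw [h0, mul_zero] at this
      exact le_antisymm this zero_le
    have hvol2 : volume (Aᶜ ∩ I) = 0 := by
      have := hbound lam1 hlam1prob hlam1I hlam1T Aᶜ
      have h0 : lam1 Aᶜ = 0 := by
        rw [hlam1]
        simp only [Measure.smul_apply, smul_eq_mul, Measure.restrict_apply hAmeas.compl]
        rw [Set.compl_inter_self, measure_empty, mul_zero]
      rw [h0, mul_zero] at this
      exact le_antisymm this zero_le
    have hsplit : (I : Set ℝ) ⊆ (A ∩ I) ∪ (Aᶜ ∩ I) := by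
      intro x hx
      by_cases hxA : x ∈ A
      · exact Or.inl ⟨hxA, hx⟩
      · exact Or.inr ⟨hxA, hx⟩
    have : volume (I : Set ℝ) ≤ 0 := by
      calc volume (I : Set ℝ) ≤ volume ((A ∩ I) ∪ (Aᶜ ∩ I)) := measure_mono hsplit
        _ ≤ volume (A ∩ I) + volume (Aᶜ ∩ I) := measure_union_le _ _
        _ = 0 := by rw [hvol1, hvol2, add_zero]
    have hIvol : volume (I : Set ℝ) = 1 := by
      rw [hI, Real.volume_Ico]
      norm_num
    rw [hIvol] at this
    exact absurd this (by norm_num)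

end Unique

section Piecewise

open scoped ENNReal

variable (r : ℕ) (β : ℕ → ℝ) (T : ℝ → ℝ) (vfun : ℕ → ℝ)

/-- the explicit measurable version of T -/
noncomputable def Tpw (r : ℕ) (β : ℕ → ℝ) (vfun : ℕ → ℝ) : ℝ → ℝ :=
  fun x => ∑ i ∈ Finset.range r, (Set.Ico (β i) (β (i+1))).indicator (fun y => y + vfun i) x

/-- the explicit measurable version of the inverse -/
noncomputable def Tpwinv (r : ℕ) (β : ℕ → ℝ) (vfun : ℕ → ℝ) : ℝ → ℝ :=
  fun x => ∑ i ∈ Finset.range r,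
    (Set.Ico (β i + vfun i) (β (i+1) + vfun i)).indicator (fun y => y - vfun i) x

lemma Tpw_measurable : Measurable (Tpw r β vfun) := by
  apply Finset.measurable_sum
  intro i _
  exact (measurable_id.add_const _).indicator measurableSet_Ico

lemma Tpwinv_measurable : Measurable (Tpwinv r β vfun) := by
  apply Finset.measurable_sum
  intro i _
  exact (measurable_id.sub_const _).indicator measurableSet_Ico

lemma beta_mono' (hβmono : ∀ i j : ℕ, i < j → j ≤ r → β i < β j) :
    ∀ i j : ℕ, i ≤ j → j ≤ r → β i ≤ β j := by
  intro i j hij hjr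
  rcases eq_or_lt_of_le hij with h | h
  · rw [h]
  · exact le_of_lt (hβmono i j h hjr)

lemma piece_sub_I (hβ0 : β 0 = 0) (hβr : β r = 1)
    (hβmono : ∀ i j : ℕ, i < j → j ≤ r → β i < β j) :
    ∀ i, i < r → Set.Ico (β i) (β (i+1)) ⊆ Set.Ico (0:ℝ) 1 := by
  intro i hir x hx
  constructor
  · calc (0:ℝ) = β 0 := hβ0.symm
      _ ≤ β i := beta_mono' r β hβmono 0 i (Nat.zero_le _) (le_of_lt hir)
      _ ≤ x := hx.1
  · calc x < β (i+1) := hx.2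
      _ ≤ β r := beta_mono' r β hβmono (i+1) r hir le_rfl
      _ = 1 := hβr

lemma piece_disjoint (hβmono : ∀ i j : ℕ, i < j → j ≤ r → β i < β j) :
    ∀ i j : ℕ, i < r → j < r → i ≠ j →
      Disjoint (Set.Ico (β i) (β (i+1))) (Set.Ico (β j) (β (j+1))) := by
  have key : ∀ i j : ℕ, i < j → j < r →
      Disjoint (Set.Ico (β i) (β (i+1))) (Set.Ico (β j) (β (j+1))) := by
    intro i j hij hjr
    apply Set.Ico_disjoint_Ico.mpr
    rw [min_le_iff]; left
    rw [le_max_iff]; right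
    exact beta_mono' r β hβmono (i+1) j hij (le_of_lt hjr)
  intro i j hir hjr hne
  rcases Nat.lt_or_ge i j with h | h
  · exact key i j h hjr
  · have : j < i := by omega
    exact (key j i this hir).symm

lemma Tpw_eq_piece (hβmono : ∀ i j : ℕ, i < j → j ≤ r → β i < β j) :
    ∀ i, i < r → ∀ x ∈ Set.Ico (β i) (β (i+1)), Tpw r β vfun x = x + vfun i := by
  intro i hir x hx
  rw [Tpw]
  rw [Finset.sum_eq_single i]
  · rw [Set.indicator_of_mem hx]
  · intro b hb hbne
    apply Set.indicator_of_notMem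
    intro hxb
    exact (piece_disjoint r β hβmono b i (Finset.mem_range.mp hb) hir hbne).ne_of_mem hxb hx rfl
  · intro h
    exact absurd (Finset.mem_range.mpr hir) h

lemma Tpwinv_eq_piece (hβ0 : β 0 = 0) (hβr : β r = 1)
    (hβmono : ∀ i j : ℕ, i < j → j ≤ r → β i < β j)
    (hTbij : Set.BijOn T (Set.Ico 0 1) (Set.Ico 0 1))
    (hvfun : ∀ i, i < r → ∀ x ∈ Set.Ico (β i) (β (i + 1)), T x = x + vfun i) :
    ∀ i, i < r → ∀ y ∈ Set.Ico (β i + vfun i) (β (i+1) + vfun i),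
      Tpwinv r β vfun y = y - vfun i := by
  intro i hir y hy
  rw [Tpwinv]
  rw [Finset.sum_eq_single i]
  · rw [Set.indicator_of_mem hy]
  · intro b hb hbne
    apply Set.indicator_of_notMem
    intro hyb
    -- images are disjoint by injectivity
    have hbr : b < r := Finset.mem_range.mp hb
    have hxb : y - vfun b ∈ Set.Ico (β b) (β (b+1)) := by
      constructor
      · linarith [hyb.1]
      · linarith [hyb.2]
    have hxi : y - vfun i ∈ Set.Ico (β i) (β (i+1)) := by
      constructor
      · linarith [hy.1]
      · linarith [hy.2]
    have hTb : T (y - vfun b) = y := by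
      rw [hvfun b hbr _ hxb]; ring
    have hTi : T (y - vfun i) = y := by
      rw [hvfun i hir _ hxi]; ring
    have heq : y - vfun b = y - vfun i := by
      apply hTbij.injOn (piece_sub_I r β hβ0 hβr hβmono b hbr hxb)
        (piece_sub_I r β hβ0 hβr hβmono i hir hxi)
      rw [hTb, hTi]
    have : y - vfun b ∈ Set.Ico (β i) (β (i+1)) := by rw [heq]; exact hxi
    exact (piece_disjoint r β hβmono b i hbr hir hbne).ne_of_mem hxb this rfl
  · intro h
    exact absurd (Finset.mem_range.mpr hir) h

lemma Tpw_eq_T (hβ0 : β 0 = 0) (hβr : β r = 1)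
    (hβmono : ∀ i j : ℕ, i < j → j ≤ r → β i < β j)
    (hvfun : ∀ i, i < r → ∀ x ∈ Set.Ico (β i) (β (i + 1)), T x = x + vfun i) :
    ∀ x ∈ Set.Ico (0:ℝ) 1, Tpw r β vfun x = T x := by
  intro x hx
  obtain ⟨i, hir, hxi⟩ := piece_exists r β hβ0 hβr hβmono x hx
  rw [Tpw_eq_piece r β vfun hβmono i hir x hxi, hvfun i hir x hxi]

lemma Tpwinv_leftinv (hβ0 : β 0 = 0) (hβr : β r = 1)
    (hβmono : ∀ i j : ℕ, i < j → j ≤ r → β i < β j)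
    (hTbij : Set.BijOn T (Set.Ico 0 1) (Set.Ico 0 1))
    (hvfun : ∀ i, i < r → ∀ x ∈ Set.Ico (β i) (β (i + 1)), T x = x + vfun i) :
    ∀ x ∈ Set.Ico (0:ℝ) 1, Tpwinv r β vfun (Tpw r β vfun x) = x := by
  intro x hx
  obtain ⟨i, hir, hxi⟩ := piece_exists r β hβ0 hβr hβmono x hx
  rw [Tpw_eq_piece r β vfun hβmono i hir x hxi]
  have hmem : x + vfun i ∈ Set.Ico (β i + vfun i) (β (i+1) + vfun i) := by
    constructor
    · linarith [hxi.1]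
    · linarith [hxi.2]
  rw [Tpwinv_eq_piece r β T vfun hβ0 hβr hβmono hTbij hvfun i hir _ hmem]
  ring

lemma J_sub_I (hβ0 : β 0 = 0) (hβr : β r = 1)
    (hβmono : ∀ i j : ℕ, i < j → j ≤ r → β i < β j)
    (hTbij : Set.BijOn T (Set.Ico 0 1) (Set.Ico 0 1))
    (hvfun : ∀ i, i < r → ∀ x ∈ Set.Ico (β i) (β (i + 1)), T x = x + vfun i) :
    ∀ i, i < r → Set.Ico (β i + vfun i) (β (i+1) + vfun i) ⊆ Set.Ico (0:ℝ) 1 := by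
  intro i hir y hy
  have hxi : y - vfun i ∈ Set.Ico (β i) (β (i+1)) := ⟨by linarith [hy.1], by linarith [hy.2]⟩
  have : T (y - vfun i) = y := by rw [hvfun i hir _ hxi]; ring
  rw [← this]
  exact hTbij.mapsTo (piece_sub_I r β hβ0 hβr hβmono i hir hxi)

lemma J_cover (hβ0 : β 0 = 0) (hβr : β r = 1)
    (hβmono : ∀ i j : ℕ, i < j → j ≤ r → β i < β j)
    (hTbij : Set.BijOn T (Set.Ico 0 1) (Set.Ico 0 1))
    (hvfun : ∀ i, i < r → ∀ x ∈ Set.Ico (β i) (β (i + 1)), T x = x + vfun i) :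
    (⋃ i ∈ Finset.range r, Set.Ico (β i + vfun i) (β (i+1) + vfun i)) = Set.Ico (0:ℝ) 1 := by
  apply Set.Subset.antisymm
  · apply Set.iUnion₂_subset
    intro i hi
    exact J_sub_I r β T vfun hβ0 hβr hβmono hTbij hvfun i (Finset.mem_range.mp hi)
  · intro y hy
    obtain ⟨x, hxI, hTx⟩ := hTbij.surjOn hy
    obtain ⟨i, hir, hxi⟩ := piece_exists r β hβ0 hβr hβmono x hxI
    apply Set.mem_biUnion (Finset.mem_range.mpr hir)
    rw [← hTx, hvfun i hir x hxi]
    exact ⟨by linarith [hxi.1], by linarith [hxi.2]⟩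

lemma J_disjoint (hβ0 : β 0 = 0) (hβr : β r = 1)
    (hβmono : ∀ i j : ℕ, i < j → j ≤ r → β i < β j)
    (hTbij : Set.BijOn T (Set.Ico 0 1) (Set.Ico 0 1))
    (hvfun : ∀ i, i < r → ∀ x ∈ Set.Ico (β i) (β (i + 1)), T x = x + vfun i) :
    ∀ i j : ℕ, i < r → j < r → i ≠ j →
      Disjoint (Set.Ico (β i + vfun i) (β (i+1) + vfun i))
        (Set.Ico (β j + vfun j) (β (j+1) + vfun j)) := by
  intro i j hir hjr hne
  rw [Set.disjoint_left]
  intro y hyi hyj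
  have hxi : y - vfun i ∈ Set.Ico (β i) (β (i+1)) := ⟨by linarith [hyi.1], by linarith [hyi.2]⟩
  have hxj : y - vfun j ∈ Set.Ico (β j) (β (j+1)) := ⟨by linarith [hyj.1], by linarith [hyj.2]⟩
  have hTi : T (y - vfun i) = y := by rw [hvfun i hir _ hxi]; ring
  have hTj : T (y - vfun j) = y := by rw [hvfun j hjr _ hxj]; ring
  have heq : y - vfun i = y - vfun j := by
    apply hTbij.injOn (piece_sub_I r β hβ0 hβr hβmono i hir hxi)
      (piece_sub_I r β hβ0 hβr hβmono j hjr hxj)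
    rw [hTi, hTj]
  have : y - vfun i ∈ Set.Ico (β j) (β (j+1)) := by rw [heq]; exact hxj
  exact (piece_disjoint r β hβmono i j hir hjr hne).ne_of_mem hxi this rfl

/-- Lebesgue measure restricted to [0,1) is invariant -/
lemma lebesgue_invariant (hβ0 : β 0 = 0) (hβr : β r = 1)
    (hβmono : ∀ i j : ℕ, i < j → j ≤ r → β i < β j)
    (hTbij : Set.BijOn T (Set.Ico 0 1) (Set.Ico 0 1))
    (hvfun : ∀ i, i < r → ∀ x ∈ Set.Ico (β i) (β (i + 1)), T x = x + vfun i) :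
    (volume.restrict (Set.Ico (0:ℝ) 1)).map (Tpw r β vfun)
      = volume.restrict (Set.Ico (0:ℝ) 1) := by
  set T' := Tpw r β vfun with hT'
  have hT'm : Measurable T' := Tpw_measurable r β vfun
  ext B hB
  rw [Measure.map_apply hT'm hB, Measure.restrict_apply (hT'm hB), Measure.restrict_apply hB]
  -- decompose the preimage over the pieces
  have hdecomp : T' ⁻¹' B ∩ Set.Ico (0:ℝ) 1
      = ⋃ i ∈ Finset.range r, (T' ⁻¹' B ∩ Set.Ico (β i) (β (i+1))) := by
    apply Set.Subset.antisymm
    · rintro x ⟨hxB, hxI⟩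
      obtain ⟨i, hir, hxi⟩ := piece_exists r β hβ0 hβr hβmono x hxI
      exact Set.mem_biUnion (Finset.mem_range.mpr hir) ⟨hxB, hxi⟩
    · intro x hx
      rw [Set.mem_iUnion₂] at hx
      obtain ⟨i, hi, hxB, hxi⟩ := hx
      exact ⟨hxB, piece_sub_I r β hβ0 hβr hβmono i (Finset.mem_range.mp hi) hxi⟩
  rw [hdecomp]
  rw [measure_biUnion_finset ?hd ?hm]
  case hd =>
    intro i hi j hj hne
    exact Disjoint.inter_left' _ (Disjoint.inter_right' _
      (piece_disjoint r β hβmono i j (Finset.mem_range.mp hi) (Finset.mem_range.mp hj) hne))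
  case hm =>
    intro i _
    exact (hT'm hB).inter measurableSet_Ico
  -- each piece translates
  have hpiece : ∀ i ∈ Finset.range r,
      volume (T' ⁻¹' B ∩ Set.Ico (β i) (β (i+1)))
        = volume (B ∩ Set.Ico (β i + vfun i) (β (i+1) + vfun i)) := by
    intro i hi
    have hir := Finset.mem_range.mp hi
    have hseteq : T' ⁻¹' B ∩ Set.Ico (β i) (β (i+1))
        = (fun y => y + vfun i) ⁻¹' (B ∩ Set.Ico (β i + vfun i) (β (i+1) + vfun i)) := by
      ext y
      simp only [Set.mem_inter_iff, Set.mem_preimage]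
      constructor
      · rintro ⟨hyB, hyi⟩
        rw [hT', Tpw_eq_piece r β vfun hβmono i hir y hyi] at hyB
        exact ⟨hyB, ⟨by linarith [hyi.1], by linarith [hyi.2]⟩⟩
      · rintro ⟨hyB, hyJ⟩
        have hyi : y ∈ Set.Ico (β i) (β (i+1)) := ⟨by linarith [hyJ.1], by linarith [hyJ.2]⟩
        refine ⟨?_, hyi⟩
        show T' y ∈ B
        rw [hT', Tpw_eq_piece r β vfun hβmono i hir y hyi]
        exact hyB
    rw [hseteq, measure_preimage_add_right volume (vfun i) _]
  rw [Finset.sum_congr rfl hpiece]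
  -- sum the images
  have himg : ∀ i ∈ Finset.range r, MeasurableSet
      (B ∩ Set.Ico (β i + vfun i) (β (i+1) + vfun i)) := fun i _ => hB.inter measurableSet_Ico
  rw [← measure_biUnion_finset ?hd2 himg]
  case hd2 =>
    intro i hi j hj hne
    exact Disjoint.inter_left' _ (Disjoint.inter_right' _
      (J_disjoint r β T vfun hβ0 hβr hβmono hTbij hvfun i j
        (Finset.mem_range.mp hi) (Finset.mem_range.mp hj) hne))
  congr 1
  rw [← Set.inter_iUnion₂]
  rw [J_cover r β T vfun hβ0 hβr hβmono hTbij hvfun]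

end Piecewise

/-- Corollary 4.6: every IET with balanced partition lengths is uniquely
ergodic: Lebesgue measure on `[0,1)` is the unique `T`-invariant Borel probability
measure on `[0,1)`. -/
theorem stmt4
    (r : ℕ) (hr : 2 ≤ r)
    (β : ℕ → ℝ) (hβ0 : β 0 = 0) (hβr : β r = 1)
    (hβmono : ∀ i j : ℕ, i < j → j ≤ r → β i < β j)
    (T Tinv : ℝ → ℝ)
    (hTbij : Set.BijOn T (Set.Ico 0 1) (Set.Ico 0 1))
    (hTtrans : ∀ i : ℕ, i < r → ∃ v : ℝ, ∀ x ∈ Set.Ico (β i) (β (i + 1)), T x = x + v)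
    (hTinv : ∀ x ∈ Set.Ico (0 : ℝ) 1,
      Tinv (T x) = x ∧ T (Tinv x) = x ∧ Tinv x ∈ Set.Ico (0 : ℝ) 1)
    (c : ℝ) (hc : 0 < c)
    (hbal : BalancedPartitionLengths r β T Tinv c) :
    ∀ μ : Measure ℝ, IsProbabilityMeasure μ → μ (Set.Ico (0 : ℝ) 1)ᶜ = 0 →
      μ.map T = μ → μ = volume.restrict (Set.Ico (0 : ℝ) 1) := by
  classical
  intro μ hμprob hμI hμmap
  obtain ⟨hbal1, hbal2⟩ := hbal
  -- choose the translation vectors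
  have hTt : ∀ i : ℕ, ∃ w : ℝ, i < r → ∀ x ∈ Set.Ico (β i) (β (i+1)), T x = x + w := by
    intro i
    by_cases h : i < r
    · obtain ⟨w, hw⟩ := hTtrans i h
      exact ⟨w, fun _ => hw⟩
    · exact ⟨0, fun h' => absurd h' h⟩
  choose vfun hvfun' using hTt
  have hvfun : ∀ i, i < r → ∀ x ∈ Set.Ico (β i) (β (i+1)), T x = x + vfun i :=
    fun i hi => hvfun' i hi
  set T' : ℝ → ℝ := Tpw r β vfun with hT'def
  set Tinv' : ℝ → ℝ := Tpwinv r β vfun with hTinv'def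
  have hT'm : Measurable T' := Tpw_measurable r β vfun
  have hTinv'm : Measurable Tinv' := Tpwinv_measurable r β vfun
  have hT'eq : ∀ x ∈ Set.Ico (0:ℝ) 1, T' x = T x :=
    Tpw_eq_T r β T vfun hβ0 hβr hβmono hvfun
  have hlinv : ∀ x ∈ Set.Ico (0:ℝ) 1, Tinv' (T' x) = x :=
    Tpwinv_leftinv r β T vfun hβ0 hβr hβmono hTbij hvfun
  have hT'maps : Set.MapsTo T' (Set.Ico (0:ℝ) 1) (Set.Ico (0:ℝ) 1) := by
    intro x hx
    rw [hT'eq x hx]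
    exact hTbij.mapsTo hx
  have horbit : ∀ x ∈ Set.Ico (0:ℝ) 1, ∀ l : ℕ, T'^[l] x = T^[l] x := by
    intro x hx l
    induction l with
    | zero => simp
    | succ l ih =>
      rw [Function.iterate_succ_apply' T', Function.iterate_succ_apply' T, ih,
        hT'eq _ (T_iter_mem T hTbij.mapsTo x hx l)]
  -- c ≥ 1
  have hc1 : 1 ≤ c := by
    obtain ⟨a, b, hgap, _, _⟩ := exists_atom r β T Tinv hβ0 hβr hβmono hr hTinv 1 0
      ⟨le_rfl, zero_lt_one⟩
    have hsub := partPts_subset r β T Tinv hβ0 hβr hβmono hr hTinv 1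
    have ha := hsub hgap.1
    have hb := hsub hgap.2.1
    have hlow := (hbal1 1 le_rfl a b hgap).1
    have h1 : 1/(c * (1:ℕ)) ≤ b - a := hlow
    have h2 : b - a ≤ 1 := by
      have := ha.1; have := hb.2; linarith
    have h3 : 1/c ≤ 1 := by
      have h4 : (1:ℝ)/(c * (1:ℕ)) = 1/c := by norm_num
      linarith [h4 ▸ h1]
    rw [div_le_one hc] at h3
    exact h3
  -- the counting bound for T'
  have hcount' : ∀ u v : ℝ, 0 ≤ u → u < v → v ≤ 1 → ∀ j : ℕ, 1 ≤ j → c / j ≤ v - u →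
      ∀ x ∈ Set.Ico (0:ℝ) 1, (j:ℝ) * (v - u) / c - 4 ≤
        (((Finset.range j).filter (fun l => T'^[l] x ∈ Set.Ico u v)).card : ℝ) := by
    intro u v h0u huv hv1 j hj hcj x hx
    have h := count_ge r β T Tinv hβ0 hβr hβmono hr hTbij hTtrans hTinv c hc
      ⟨hbal1, hbal2⟩ u v h0u huv hv1 j hj hcj x hx
    have hfeq : (Finset.range j).filter (fun l => T'^[l] x ∈ Set.Ico u v)
        = (Finset.range j).filter (fun l => T^[l] x ∈ Set.Ico u v) := by
      apply Finset.filter_congr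
      intro l _
      rw [horbit x hx l]
    rw [hfeq]
    exact h
  -- the Borel bound for invariant probability measures
  have hbound : ∀ lam : Measure ℝ, IsProbabilityMeasure lam →
      lam (Set.Ico (0:ℝ) 1)ᶜ = 0 → lam.map T' = lam → ∀ A : Set ℝ,
        volume (A ∩ Set.Ico (0:ℝ) 1) ≤ ENNReal.ofReal c * lam A := by
    intro lam hp hIc hmapinv A
    exact borel_bound c hc1 lam hp
      (fun u v h0u huv hv1 => interval_lower T' hT'm c hc hcount' lam hp hIc hmapinv
        u v h0u huv hv1) A
  -- Lebesgue measure restricted to [0,1)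
  set ν : Measure ℝ := volume.restrict (Set.Ico (0:ℝ) 1) with hν
  have hνp : IsProbabilityMeasure ν := by
    constructor
    rw [hν, Measure.restrict_apply_univ, Real.volume_Ico]
    norm_num
  have hνI : ν (Set.Ico (0:ℝ) 1)ᶜ = 0 := by
    rw [hν, Measure.restrict_apply measurableSet_Ico.compl, Set.compl_inter_self,
      measure_empty]
  have hνT : ν.map T' = ν := lebesgue_invariant r β T vfun hβ0 hβr hβmono hTbij hvfun
  -- μ is invariant under T'
  have haeμ : ∀ᵐ x ∂μ, x ∈ Set.Ico (0:ℝ) 1 := by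
    rw [ae_iff]
    have he : {x : ℝ | ¬ x ∈ Set.Ico (0:ℝ) 1} = (Set.Ico (0:ℝ) 1)ᶜ := rfl
    rw [he]
    exact hμI
  have haeTT : T' =ᵐ[μ] T := by
    filter_upwards [haeμ] with x hx
    exact hT'eq x hx
  have hμT' : μ.map T' = μ := by
    rw [Measure.map_congr haeTT, hμmap]
  exact invariant_unique T' hT'm Tinv' hTinv'm hlinv hT'maps c hc1 hbound
    μ ν hμprob hνp hμI hνI hμT' hνT
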